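/- For the compatibility problem of two binary conditionals C = p(x_1 | x_2) and D = p(x_2 | x_1) with d_1 = d_2 = 2: two matrices C, D ∈ ℝ^{2×2} with strictly positive entries, columns of C summing to 1 and rows of D summing to 1, are compatible if and only if C_{11}C_{22}D_{12}D_{21} = C_{12}C_{21}D_{11}D_{22}. -/

import Mathlib

set_option autoImplicit false

set_option maxHeartbeats 800000 in
/-- two strictly positive `2 × 2` conditional matrices `C = p(x₁|x₂)` and
`D = p(x₂|x₁)` (columns of `C` and rows of `D` summing to one) are compatible if and only if
their odds ratios agree: `C₁₁C₂₂D₁₂D₂₁ = C₁₂C₂₁D₁₁D₂₂`. -/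
theorem two_by_two_compatible_iff_odds_ratio
    (C D : Fin 2 → Fin 2 → ℝ)
    (hC : ∀ i j, 0 < C i j) (hD : ∀ i j, 0 < D i j)
    (hCsum : ∀ j, ∑ i, C i j = 1) (hDsum : ∀ i, ∑ j, D i j = 1) :
    (∃ P : Fin 2 → Fin 2 → ℝ,
      (∀ i j, 0 < P i j) ∧ (∑ i, ∑ j, P i j = 1) ∧
      (∀ i j, C i j = P i j / (P 0 j + P 1 j)) ∧
      (∀ i j, D i j = P i j / (P i 0 + P i 1))) ↔
    C 0 0 * C 1 1 * D 0 1 * D 1 0 = C 0 1 * C 1 0 * D 0 0 * D 1 1 := by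
  have c00 := hC 0 0; have c01 := hC 0 1; have c10 := hC 1 0; have c11 := hC 1 1
  have d00 := hD 0 0; have d01 := hD 0 1; have d10 := hD 1 0; have d11 := hD 1 1
  constructor
  · rintro ⟨P, hP, -, hCP, hDP⟩
    have p00 := hP 0 0; have p01 := hP 0 1; have p10 := hP 1 0; have p11 := hP 1 1
    rw [hCP 0 0, hCP 1 1, hCP 0 1, hCP 1 0, hDP 0 1, hDP 1 0, hDP 0 0, hDP 1 1]
    have h1 : P 0 0 + P 1 0 ≠ 0 := by linarith
    have h2 : P 0 1 + P 1 1 ≠ 0 := by linarith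
    have h3 : P 0 0 + P 0 1 ≠ 0 := by linarith
    have h4 : P 1 0 + P 1 1 ≠ 0 := by linarith
    field_simp
  · intro hodds
    have hc0 := hCsum 0; have hc1 := hCsum 1
    have hd0 := hDsum 0; have hd1 := hDsum 1
    simp [Fin.sum_univ_two] at hc0 hc1 hd0 hd1
    set S : ℝ := C 0 1 * D 0 0 + C 0 0 * D 0 1 with hSdef
    have hS : 0 < S := by nlinarith
    have hS' : S ≠ 0 := ne_of_gt hS
    refine ⟨fun i j => C i j * (if j = 0 then C 0 1 * D 0 0 else C 0 0 * D 0 1) / S,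
      ?_, ?_, ?_, ?_⟩
    · intro i j
      fin_cases j <;> simp <;> apply div_pos _ hS
      · exact mul_pos (hC i 0) (mul_pos c01 d00)
      · exact mul_pos (hC i 1) (mul_pos c00 d01)
    · simp [Fin.sum_univ_two]
      field_simp
      nlinarith [mul_pos c01 d00, mul_pos c00 d01]
    · intro i j
      fin_cases i <;> fin_cases j <;> simp <;> field_simp
      · linear_combination hc0
      · linear_combination hc1
      · linear_combination hc0
      · linear_combination hc1
    · intro i j
      fin_cases i <;> fin_cases j
      all_goals simp only [Fin.isValue, Fin.zero_eta, Fin.mk_one, if_true, reduceIte, one_ne_zero, if_false]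
      all_goals field_simp
      · linear_combination hd0
      · linear_combination hd0
      · linear_combination hodds + C 0 1 * C 1 0 * D 0 0 * hd1
      · linear_combination -hodds + C 0 0 * C 1 1 * D 0 1 * hd1
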